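/- With the notation of the previous statement, writing $R(t) = v(t) - v_0(t)$ and $r(t) = \dot c c^{-1} - \dot c_0 c_0^{-1}$ with $\|r(t)\|_{c_0} < \varepsilon$ and $\|v_0(t)\|_{c_0} = 1$, one has the differential inequality $\frac{d}{dt}\| R(t) \|^2_{c_0} \le 2\varepsilon ( \| R(t) \|^2_{c_0} + \| R(t) \|_{c_0} )$. -/

import Mathlib

open Matrix
open scoped ComplexOrder

attribute [local instance] Matrix.frobeniusNormedAddCommGroup Matrix.frobeniusNormedRing
  Matrix.frobeniusNormedSpace

/-- Membership in the matrix model `𝒟` of hyperbolic 3-space. -/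
def memD (h : Matrix (Fin 2) (Fin 2) ℂ) : Prop :=
  h.IsHermitian ∧ h.det = 1 ∧ h.PosDef

/-- The squared norm `‖M‖_h² = ½ tr (M h Mᴴ h⁻¹)`. -/
noncomputable def hNormSq (h M : Matrix (Fin 2) (Fin 2) ℂ) : ℝ :=
  ((2 : ℂ)⁻¹ * (M * h * Mᴴ * h⁻¹).trace).re

/-- The norm `‖M‖_h`. -/
noncomputable def hNorm (h M : Matrix (Fin 2) (Fin 2) ℂ) : ℝ :=
  Real.sqrt (hNormSq h M)

/- ### Auxiliary development -/

attribute [local instance] Matrix.frobeniusNormedAlgebra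

abbrev M2' := Matrix (Fin 2) (Fin 2) ℂ

noncomputable local instance : NormedAlgebra ℝ M2' := NormedAlgebra.restrictScalars ℝ ℂ M2'

section coord
open Complex

/-- Frobenius squared functional. -/
noncomputable def Efro (A : M2') : ℝ := ((A * Aᴴ).trace).re
/-- Frobenius real inner product. -/
noncomputable def ipF (A B : M2') : ℝ := ((A * Bᴴ).trace).re

lemma ipF_expand (A B : M2') : ipF A B =
    (A 0 0).re * (B 0 0).re + (A 0 0).im * (B 0 0).im
    + ((A 0 1).re * (B 0 1).re + (A 0 1).im * (B 0 1).im)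
    + ((A 1 0).re * (B 1 0).re + (A 1 0).im * (B 1 0).im)
    + ((A 1 1).re * (B 1 1).re + (A 1 1).im * (B 1 1).im) := by
  simp [ipF, Matrix.trace_fin_two, Matrix.mul_apply, Fin.sum_univ_two,
    Matrix.conjTranspose_apply, Complex.mul_re]
  ring

lemma Efro_eq_ipF (A : M2') : Efro A = ipF A A := rfl

lemma Efro_expand (A : M2') : Efro A =
    (A 0 0).re ^ 2 + (A 0 0).im ^ 2 + (A 0 1).re ^ 2 + (A 0 1).im ^ 2
    + (A 1 0).re ^ 2 + (A 1 0).im ^ 2 + (A 1 1).re ^ 2 + (A 1 1).im ^ 2 := by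
  rw [Efro_eq_ipF, ipF_expand]; ring

lemma Efro_nonneg (A : M2') : 0 ≤ Efro A := by rw [Efro_expand]; positivity

open Complex in
lemma Efro_normSq (M : M2') : Efro M =
    normSq (M 0 0) + normSq (M 0 1) + normSq (M 1 0) + normSq (M 1 1) := by
  rw [Efro_expand]; simp only [normSq_apply]; ring

lemma ipF_add_left (X Y Z : M2') : ipF (X + Y) Z = ipF X Z + ipF Y Z := by
  simp [ipF, add_mul, Matrix.trace_add]

lemma cs_aux (a1 a2 a3 a4 a5 a6 a7 a8 b1 b2 b3 b4 b5 b6 b7 b8 : ℝ) :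
    (a1*b1+a2*b2+a3*b3+a4*b4+a5*b5+a6*b6+a7*b7+a8*b8)^2
      ≤ (a1^2+a2^2+a3^2+a4^2+a5^2+a6^2+a7^2+a8^2)*(b1^2+b2^2+b3^2+b4^2+b5^2+b6^2+b7^2+b8^2) := by
  have hnn : (0:ℝ) ≤ (a1*b2-a2*b1)^2 + (a1*b3-a3*b1)^2 + (a1*b4-a4*b1)^2 + (a1*b5-a5*b1)^2
      + (a1*b6-a6*b1)^2 + (a1*b7-a7*b1)^2 + (a1*b8-a8*b1)^2 + (a2*b3-a3*b2)^2
      + (a2*b4-a4*b2)^2 + (a2*b5-a5*b2)^2 + (a2*b6-a6*b2)^2 + (a2*b7-a7*b2)^2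
      + (a2*b8-a8*b2)^2 + (a3*b4-a4*b3)^2 + (a3*b5-a5*b3)^2 + (a3*b6-a6*b3)^2
      + (a3*b7-a7*b3)^2 + (a3*b8-a8*b3)^2 + (a4*b5-a5*b4)^2 + (a4*b6-a6*b4)^2
      + (a4*b7-a7*b4)^2 + (a4*b8-a8*b4)^2 + (a5*b6-a6*b5)^2 + (a5*b7-a7*b5)^2
      + (a5*b8-a8*b5)^2 + (a6*b7-a7*b6)^2 + (a6*b8-a8*b6)^2 + (a7*b8-a8*b7)^2 := by positivity
  linarith [hnn]

/-- Cauchy–Schwarz for the Frobenius inner product. -/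
lemma ipF_le (A B : M2') : ipF A B ≤ Real.sqrt (Efro A) * Real.sqrt (Efro B) := by
  have h2 : (ipF A B)^2 ≤ Efro A * Efro B := by
    rw [ipF_expand, Efro_expand A, Efro_expand B]
    linarith [cs_aux (A 0 0).re (A 0 0).im (A 0 1).re (A 0 1).im (A 1 0).re (A 1 0).im
      (A 1 1).re (A 1 1).im (B 0 0).re (B 0 0).im (B 0 1).re (B 0 1).im (B 1 0).re (B 1 0).im
      (B 1 1).re (B 1 1).im]
  calc ipF A B ≤ |ipF A B| := le_abs_self _
    _ = Real.sqrt ((ipF A B)^2) := (Real.sqrt_sq_eq_abs _).symm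
    _ ≤ Real.sqrt (Efro A * Efro B) := Real.sqrt_le_sqrt h2
    _ = Real.sqrt (Efro A) * Real.sqrt (Efro B) := Real.sqrt_mul (Efro_nonneg A) _

open Complex in
set_option maxHeartbeats 2000000 in
lemma bw_aux (a b c d e f g k : ℂ) :
    normSq (b*g - f*c) + normSq (a*f + b*k - e*b - f*d)
      + normSq (c*e + d*g - g*a - k*c) + normSq (c*f - g*b)
    ≤ 2 * (normSq a + normSq b + normSq c + normSq d)
        * (normSq e + normSq f + normSq g + normSq k) := by
  have key : 4 * (normSq (b*g - f*c) + normSq (a*f + b*k - e*b - f*d)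
        + normSq (c*e + d*g - g*a - k*c) + normSq (c*f - g*b))
      + 2 * normSq ((a-d) * (starRingEnd ℂ) (e-k) + 2*b*(starRingEnd ℂ) f
          + 2*c*(starRingEnd ℂ) g)
      = 2 * (normSq (a-d) + 2*normSq b + 2*normSq c)
          * (normSq (e-k) + 2*normSq f + 2*normSq g) := by
    simp only [normSq_apply, Complex.mul_re, Complex.mul_im, Complex.sub_re, Complex.sub_im,
      Complex.add_re, Complex.add_im, Complex.conj_re, Complex.conj_im, Complex.re_ofNat,
      Complex.im_ofNat]
    ring
  have n1 := normSq_nonneg (a-d); have n2 := normSq_nonneg b; have n3 := normSq_nonneg c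
  have n4 := normSq_nonneg (e-k); have n5 := normSq_nonneg f; have n6 := normSq_nonneg g
  have hP : 0 ≤ normSq (a-d) + 2*normSq b + 2*normSq c := by linarith
  have hQ : 0 ≤ normSq (e-k) + 2*normSq f + 2*normSq g := by linarith
  have hw : 0 ≤ normSq (a+d) := normSq_nonneg _
  have hz : 0 ≤ normSq (e+k) := normSq_nonneg _
  have hS : 0 ≤ normSq ((a-d) * (starRingEnd ℂ) (e-k) + 2*b*(starRingEnd ℂ) f
      + 2*c*(starRingEnd ℂ) g) := normSq_nonneg _
  have e1 : 2 * (normSq a + normSq b + normSq c + normSq d)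
      = (normSq (a-d) + 2*normSq b + 2*normSq c) + normSq (a+d) := by
    simp only [normSq_apply, Complex.sub_re, Complex.sub_im, Complex.add_re, Complex.add_im]
    ring
  have e2 : 2 * (normSq e + normSq f + normSq g + normSq k)
      = (normSq (e-k) + 2*normSq f + 2*normSq g) + normSq (e+k) := by
    simp only [normSq_apply, Complex.sub_re, Complex.sub_im, Complex.add_re, Complex.add_im]
    ring
  nlinarith [key, hP, hQ, hw, hz, hS, mul_nonneg hP hz, mul_nonneg hw hQ, mul_nonneg hw hz]

/-- 2×2 Böttcher–Wenzel inequality. -/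
lemma bw (A B : M2') : Efro (A*B - B*A) ≤ 2 * Efro A * Efro B := by
  have e00 : (A*B - B*A) 0 0 = A 0 1 * B 1 0 - B 0 1 * A 1 0 := by
    simp [Matrix.mul_apply, Fin.sum_univ_two, Matrix.sub_apply]; ring
  have e01 : (A*B - B*A) 0 1 = A 0 0 * B 0 1 + A 0 1 * B 1 1 - B 0 0 * A 0 1 - B 0 1 * A 1 1 := by
    simp [Matrix.mul_apply, Fin.sum_univ_two, Matrix.sub_apply]; ring
  have e10 : (A*B - B*A) 1 0 = A 1 0 * B 0 0 + A 1 1 * B 1 0 - B 1 0 * A 0 0 - B 1 1 * A 1 0 := by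
    simp [Matrix.mul_apply, Fin.sum_univ_two, Matrix.sub_apply]; ring
  have e11 : (A*B - B*A) 1 1 = A 1 0 * B 0 1 - B 1 0 * A 0 1 := by
    simp [Matrix.mul_apply, Fin.sum_univ_two, Matrix.sub_apply]; ring
  rw [Efro_normSq, Efro_normSq, Efro_normSq, e00, e01, e10, e11]
  exact bw_aux (A 0 0) (A 0 1) (A 1 0) (A 1 1) (B 0 0) (B 0 1) (B 1 0) (B 1 1)

end coord

section traceware

set_option maxHeartbeats 1000000 in
/-- The key cancellation identity for the derivative of the parallel-transport norm. -/
lemma cancel (h k A V V₀ VH V0H w wH : M2') (h1 : h*k = 1) (h2 : k*h = 1) :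
    trace (((2:ℂ)⁻¹ • (w*V - V*w) - (2:ℂ)⁻¹ • ((A*k)*V₀ - V₀*(A*k))) * h * (VH - V0H) * k)
    + trace ((V - V₀) * A * (VH - V0H) * k)
    + trace ((V - V₀) * h * ((2:ℂ)⁻¹ • (VH*wH - wH*VH) - (2:ℂ)⁻¹ • (V0H*(k*A) - (k*A)*V0H)) * k)
    + trace ((V - V₀) * h * (VH - V0H) * (-(k*(A*k))))
    = (2:ℂ)⁻¹ * trace (((w - A*k)*V - V*(w - A*k)) * h * (VH - V0H) * k)
    + (2:ℂ)⁻¹ * trace ((V - V₀) * h * (VH*(wH - k*A) - (wH - k*A)*VH) * k) := by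
  have hkh : ∀ x : M2', k*(h*x) = x := fun x => by rw [← mul_assoc, h2, one_mul]
  have hhk : ∀ x : M2', h*(k*x) = x := fun x => by rw [← mul_assoc, h1, one_mul]
  have rot1 : trace (A*(k*(V₀*(h*(VH*k))))) = trace (V₀*(h*(VH*(k*(A*k))))) := by
    conv_lhs => rw [trace_mul_comm]
    simp only [mul_assoc]
    conv_lhs => rw [trace_mul_comm]
    simp only [mul_assoc]
  have rot2 : trace (A*(k*(V₀*(h*(V0H*k))))) = trace (V₀*(h*(V0H*(k*(A*k))))) := by
    conv_lhs => rw [trace_mul_comm]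
    simp only [mul_assoc]
    conv_lhs => rw [trace_mul_comm]
    simp only [mul_assoc]
  have rot3 : trace (A*(k*(V*(h*(VH*k))))) = trace (V*(h*(VH*(k*(A*k))))) := by
    conv_lhs => rw [trace_mul_comm]
    simp only [mul_assoc]
    conv_lhs => rw [trace_mul_comm]
    simp only [mul_assoc]
  have rot4 : trace (A*(k*(V*(h*(V0H*k))))) = trace (V*(h*(V0H*(k*(A*k))))) := by
    conv_lhs => rw [trace_mul_comm]
    simp only [mul_assoc]
    conv_lhs => rw [trace_mul_comm]
    simp only [mul_assoc]
  simp only [sub_mul, mul_sub, smul_mul_assoc, mul_smul_comm, mul_neg, neg_mul, mul_assoc,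
    trace_sub, trace_add, trace_smul, trace_neg, smul_sub, smul_eq_mul, hkh, hhk]
  rw [rot1, rot2, rot3, rot4]
  ring

/-- Conjugation by the square root `g` of `h` turns the `h`-pairing into Frobenius pairing. -/
lemma conj_trace (h g A B : M2') (hgH : gᴴ = g) (hgg : g*g = h) :
    trace (A*h*Bᴴ*h⁻¹) = trace ((g⁻¹*A*g) * (g⁻¹*B*g)ᴴ) := by
  have hinv : h⁻¹ = g⁻¹*g⁻¹ := by rw [← hgg, Matrix.mul_inv_rev]
  have hBt : (g⁻¹*B*g)ᴴ = g*(Bᴴ*g⁻¹ᴴ) := by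
    rw [conjTranspose_mul, conjTranspose_mul, hgH]
  rw [hBt, hinv, ← hgg, Matrix.conjTranspose_nonsing_inv, hgH]
  simp only [mul_assoc]
  conv_rhs => rw [trace_mul_comm]
  simp only [mul_assoc]

/-- Symmetry of the real part of the `h`-pairing. -/
lemma re_tr_symm (H K X Y : M2') (hH : Hᴴ = H) (hK : Kᴴ = K) :
    (trace (X*H*Yᴴ*K)).re = (trace (Y*H*Xᴴ*K)).re := by
  have : trace (Y*H*Xᴴ*K) = star (trace (X*H*Yᴴ*K)) := by
    rw [← Matrix.trace_conjTranspose]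
    simp only [conjTranspose_mul, conjTranspose_conjTranspose, hH, hK]
    conv_rhs => simp only [mul_assoc]
    conv_rhs => rw [trace_mul_comm]
    simp only [mul_assoc]
  rw [this, Complex.star_def, Complex.conj_re]

lemma adj2 (X : M2') : adjugate X = X.trace • (1 : M2') - X := by
  rw [Matrix.adjugate_fin_two, Matrix.trace_fin_two]
  ext i j
  fin_cases i <;> fin_cases j <;>
    simp [Matrix.one_apply, Matrix.smul_apply, Matrix.sub_apply]

lemma re_half_mul (z : ℂ) : ((2:ℂ)⁻¹ * z).re = 2⁻¹ * z.re := by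
  have h : ((2:ℂ)⁻¹ : ℂ) = ((2⁻¹ : ℝ) : ℂ) := by norm_num
  rw [h, Complex.re_ofReal_mul]

end traceware

section calculus

/-- conjTranspose as a continuous ℝ-linear map. -/
noncomputable def ctCLM : M2' →L[ℝ] M2' :=
  LinearMap.toContinuousLinearMap
    { toFun := fun M => Mᴴ
      map_add' := fun M N => Matrix.conjTranspose_add M N
      map_smul' := fun r M => by
        ext i j
        simp [Matrix.conjTranspose_apply, Matrix.smul_apply] }

noncomputable def trCLM : M2' →L[ℝ] ℂ :=
  LinearMap.toContinuousLinearMap ((Matrix.traceLinearMap (Fin 2) ℂ ℂ).restrictScalars ℝ)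

lemma hasDerivAt_ct {f : ℝ → M2'} {f' : M2'} {t : ℝ} (hf : HasDerivAt f f' t) :
    HasDerivAt (fun s => (f s)ᴴ) (f'ᴴ) t :=
  (ctCLM.hasFDerivAt.comp_hasDerivAt t hf : HasDerivAt (fun s => ctCLM (f s)) (ctCLM f') t)

lemma hasDerivAt_tr {f : ℝ → M2'} {f' : M2'} {t : ℝ} (hf : HasDerivAt f f' t) :
    HasDerivAt (fun s => trace (f s)) (trace f') t :=
  (trCLM.hasFDerivAt.comp_hasDerivAt t hf : HasDerivAt (fun s => trCLM (f s)) (trCLM f') t)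

lemma hasDerivAt_re {f : ℝ → ℂ} {f' : ℂ} {t : ℝ} (hf : HasDerivAt f f' t) :
    HasDerivAt (fun s => (f s).re) (f'.re) t :=
  (Complex.reCLM.hasFDerivAt.comp_hasDerivAt t hf)

end calculus

set_option maxHeartbeats 4000000

/-- With `R = v - v₀` and `r = ċ c⁻¹ - ċ₀ c₀⁻¹` satisfying `‖r‖_{c₀} < ε`, and `v₀`
a unit parallel field, one has the differential inequality
`d/dt ‖R‖²_{c₀} ≤ 2 ε (‖R‖²_{c₀} + ‖R‖_{c₀})`. -/
theorem stmt_10 (ε : ℝ) (hε : 0 < ε)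
    (c c₀ v v₀ : ℝ → Matrix (Fin 2) (Fin 2) ℂ)
    (hc : ∀ s, memD (c s)) (hc₀ : ∀ s, memD (c₀ s))
    (hdc : Differentiable ℝ c) (hdc₀ : Differentiable ℝ c₀)
    (hdv : Differentiable ℝ v) (hdv₀ : Differentiable ℝ v₀)
    -- `v` and `v₀` are parallel along `c` and `c₀` respectively
    (hv : ∀ s, deriv v s = (2 : ℂ)⁻¹ • ⁅deriv c s * (c s)⁻¹, v s⁆)
    (hv₀ : ∀ s, deriv v₀ s = (2 : ℂ)⁻¹ • ⁅deriv c₀ s * (c₀ s)⁻¹, v₀ s⁆)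
    -- `v₀` is a unit field
    (hunit₀ : ∀ s, hNorm (c₀ s) (v₀ s) = 1)
    -- `‖r(s)‖_{c₀} < ε`
    (hr : ∀ s, hNorm (c₀ s) (deriv c s * (c s)⁻¹ - deriv c₀ s * (c₀ s)⁻¹) < ε)
    (t : ℝ) :
    deriv (fun s => hNormSq (c₀ s) (v s - v₀ s)) t
      ≤ 2 * ε * (hNormSq (c₀ t) (v t - v₀ t) + hNorm (c₀ t) (v t - v₀ t)) := by
  obtain ⟨hherm, hdet, hpos⟩ := hc₀ t
  have hdet1 : ∀ s, (c₀ s).det = 1 := fun s => (hc₀ s).2.1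
  have hinv_eq : ∀ s, (c₀ s)⁻¹ = adjugate (c₀ s) := fun s => by
    rw [Matrix.inv_def, hdet1 s, Ring.inverse_one, one_smul]
  have hHH : (c₀ t)ᴴ = c₀ t := hherm
  have h1 : c₀ t * (c₀ t)⁻¹ = 1 := Matrix.mul_nonsing_inv _ (by rw [hdet]; exact isUnit_one)
  have h2 : (c₀ t)⁻¹ * c₀ t = 1 := Matrix.nonsing_inv_mul _ (by rw [hdet]; exact isUnit_one)
  have hKH : ((c₀ t)⁻¹)ᴴ = (c₀ t)⁻¹ := by rw [Matrix.conjTranspose_nonsing_inv, hHH]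
  have hHdH : (deriv c₀ t)ᴴ = deriv c₀ t := by
    have ha : HasDerivAt (fun s => (c₀ s)ᴴ) ((deriv c₀ t)ᴴ) t := hasDerivAt_ct (hdc₀ t).hasDerivAt
    have hb : (fun s => (c₀ s)ᴴ) = c₀ := funext fun s => (hc₀ s).1
    rw [hb] at ha
    exact ha.unique (hdc₀ t).hasDerivAt
  -- square root of c₀ t
  have hps : (c₀ t).PosSemidef := hpos.posSemidef
  obtain ⟨g, ggH, hgg⟩ : ∃ g : M2', gᴴ = g ∧ g * g = c₀ t := by
    open scoped MatrixOrder in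
    exact ⟨CFC.sqrt (c₀ t), (CFC.sqrt_nonneg (c₀ t)).posSemidef.1,
      CFC.sqrt_mul_sqrt_self (c₀ t) hps.nonneg⟩
  have hgu : IsUnit g.det := by
    apply IsUnit.of_mul_eq_one g.det
    rw [← Matrix.det_mul, hgg, hdet]
  have hg1 : g * g⁻¹ = 1 := Matrix.mul_nonsing_inv _ hgu
  have hg2 : g⁻¹ * g = 1 := Matrix.nonsing_inv_mul _ hgu
  have normsq_eq : ∀ M : M2', hNormSq (c₀ t) M = 2⁻¹ * Efro (g⁻¹*M*g) := by
    intro M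
    unfold hNormSq Efro
    rw [conj_trace (c₀ t) g M M ggH hgg, re_half_mul]
  -- derivative set-up
  have funeq : (fun s => hNormSq (c₀ s) (v s - v₀ s))
      = fun s => ((2:ℂ)⁻¹ * trace ((v s - v₀ s) * c₀ s * (v s - v₀ s)ᴴ * adjugate (c₀ s))).re := by
    funext s
    unfold hNormSq
    rw [hinv_eq s]
  have hRd : HasDerivAt (fun s => v s - v₀ s)
      ((2:ℂ)⁻¹ • ((deriv c t * (c t)⁻¹) * v t - v t * (deriv c t * (c t)⁻¹))
        - (2:ℂ)⁻¹ • ((deriv c₀ t * (c₀ t)⁻¹) * v₀ t - v₀ t * (deriv c₀ t * (c₀ t)⁻¹))) t := by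
    have h0 := (hdv t).hasDerivAt.sub ((hdv₀ t).hasDerivAt)
    erw [hv t, hv₀ t] at h0
    rwa [Ring.lie_def, Ring.lie_def] at h0
  have hst : (star ((2:ℂ)⁻¹) : ℂ) = (2:ℂ)⁻¹ := by norm_num
  have hRdH : HasDerivAt (fun s => (v s - v₀ s)ᴴ)
      ((2:ℂ)⁻¹ • ((v t)ᴴ * ((c t)⁻¹ᴴ * (deriv c t)ᴴ) - ((c t)⁻¹ᴴ * (deriv c t)ᴴ) * (v t)ᴴ)
        - (2:ℂ)⁻¹ • ((v₀ t)ᴴ * ((c₀ t)⁻¹ * deriv c₀ t) - ((c₀ t)⁻¹ * deriv c₀ t) * (v₀ t)ᴴ)) t := by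
    have h0 := hasDerivAt_ct hRd
    have heq : ((2:ℂ)⁻¹ • ((deriv c t * (c t)⁻¹) * v t - v t * (deriv c t * (c t)⁻¹))
        - (2:ℂ)⁻¹ • ((deriv c₀ t * (c₀ t)⁻¹) * v₀ t - v₀ t * (deriv c₀ t * (c₀ t)⁻¹)))ᴴ
        = ((2:ℂ)⁻¹ • ((v t)ᴴ * ((c t)⁻¹ᴴ * (deriv c t)ᴴ) - ((c t)⁻¹ᴴ * (deriv c t)ᴴ) * (v t)ᴴ)
        - (2:ℂ)⁻¹ • ((v₀ t)ᴴ * ((c₀ t)⁻¹ * deriv c₀ t) - ((c₀ t)⁻¹ * deriv c₀ t) * (v₀ t)ᴴ)) := by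
      simp only [Matrix.conjTranspose_sub, Matrix.conjTranspose_smul, Matrix.conjTranspose_mul,
        hKH, hHdH, hst]
    rwa [heq] at h0
  have hAdj : HasDerivAt (fun s => adjugate (c₀ s)) (-((c₀ t)⁻¹*(deriv c₀ t*(c₀ t)⁻¹))) t := by
    have e : (fun s => adjugate (c₀ s)) = fun s => (trace (c₀ s)) • (1:M2') - c₀ s :=
      funext fun s => adj2 _
    have hbase : HasDerivAt (fun s => (trace (c₀ s)) • (1:M2') - c₀ s)
        ((trace (deriv c₀ t)) • (1:M2') - deriv c₀ t) t :=
      ((hasDerivAt_tr (hdc₀ t).hasDerivAt).smul_const (1:M2')).sub (hdc₀ t).hasDerivAt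
    rw [← e, ← adj2] at hbase
    -- now hbase : HasDerivAt (fun s => adjugate (c₀ s)) (adjugate (deriv c₀ t)) t
    have hzero : deriv c₀ t * adjugate (c₀ t) + c₀ t * adjugate (deriv c₀ t) = 0 := by
      have hcf : (fun s => c₀ s * adjugate (c₀ s)) = fun _ => (1:M2') :=
        funext fun s => by rw [Matrix.mul_adjugate, hdet1 s, one_smul]
      have hp1 : HasDerivAt (fun s => c₀ s * adjugate (c₀ s))
          (deriv c₀ t * adjugate (c₀ t) + c₀ t * adjugate (deriv c₀ t)) t :=
        (hdc₀ t).hasDerivAt.mul hbase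
      rw [hcf] at hp1
      exact hp1.unique (hasDerivAt_const t 1)
    have hadjHd : adjugate (deriv c₀ t) = -((c₀ t)⁻¹*(deriv c₀ t*(c₀ t)⁻¹)) := by
      have e1 : c₀ t * adjugate (deriv c₀ t) = -(deriv c₀ t * (c₀ t)⁻¹) := by
        rw [← hinv_eq t] at hzero
        exact eq_neg_of_add_eq_zero_right hzero
      calc adjugate (deriv c₀ t) = (c₀ t)⁻¹ * (c₀ t * adjugate (deriv c₀ t)) := by
            rw [← mul_assoc, h2, one_mul]
        _ = -((c₀ t)⁻¹*(deriv c₀ t*(c₀ t)⁻¹)) := by rw [e1, mul_neg]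
    rwa [hadjHd] at hbase
  -- the derivative of the product
  have step1 : HasDerivAt (fun s => (v s - v₀ s) * c₀ s)
      (((2:ℂ)⁻¹ • ((deriv c t * (c t)⁻¹) * v t - v t * (deriv c t * (c t)⁻¹))
        - (2:ℂ)⁻¹ • ((deriv c₀ t * (c₀ t)⁻¹) * v₀ t - v₀ t * (deriv c₀ t * (c₀ t)⁻¹))) * c₀ t
        + (v t - v₀ t) * deriv c₀ t) t := hRd.mul (hdc₀ t).hasDerivAt
  have step2 : HasDerivAt (fun s => (v s - v₀ s) * c₀ s * (v s - v₀ s)ᴴ)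
      ((((2:ℂ)⁻¹ • ((deriv c t * (c t)⁻¹) * v t - v t * (deriv c t * (c t)⁻¹))
        - (2:ℂ)⁻¹ • ((deriv c₀ t * (c₀ t)⁻¹) * v₀ t - v₀ t * (deriv c₀ t * (c₀ t)⁻¹))) * c₀ t
        + (v t - v₀ t) * deriv c₀ t) * (v t - v₀ t)ᴴ
       + ((v t - v₀ t) * c₀ t) *
         ((2:ℂ)⁻¹ • ((v t)ᴴ * ((c t)⁻¹ᴴ * (deriv c t)ᴴ) - ((c t)⁻¹ᴴ * (deriv c t)ᴴ) * (v t)ᴴ)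
          - (2:ℂ)⁻¹ • ((v₀ t)ᴴ * ((c₀ t)⁻¹ * deriv c₀ t) - ((c₀ t)⁻¹ * deriv c₀ t) * (v₀ t)ᴴ))) t :=
    step1.mul hRdH
  have step3 : HasDerivAt (fun s => (v s - v₀ s) * c₀ s * (v s - v₀ s)ᴴ * adjugate (c₀ s))
      (((((2:ℂ)⁻¹ • ((deriv c t * (c t)⁻¹) * v t - v t * (deriv c t * (c t)⁻¹))
        - (2:ℂ)⁻¹ • ((deriv c₀ t * (c₀ t)⁻¹) * v₀ t - v₀ t * (deriv c₀ t * (c₀ t)⁻¹))) * c₀ t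
        + (v t - v₀ t) * deriv c₀ t) * (v t - v₀ t)ᴴ
       + ((v t - v₀ t) * c₀ t) *
         ((2:ℂ)⁻¹ • ((v t)ᴴ * ((c t)⁻¹ᴴ * (deriv c t)ᴴ) - ((c t)⁻¹ᴴ * (deriv c t)ᴴ) * (v t)ᴴ)
          - (2:ℂ)⁻¹ • ((v₀ t)ᴴ * ((c₀ t)⁻¹ * deriv c₀ t) - ((c₀ t)⁻¹ * deriv c₀ t) * (v₀ t)ᴴ)))
        * adjugate (c₀ t)
       + ((v t - v₀ t) * c₀ t * (v t - v₀ t)ᴴ) * (-((c₀ t)⁻¹*(deriv c₀ t*(c₀ t)⁻¹)))) t := by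
    exact step2.mul hAdj
  have htr := hasDerivAt_tr step3
  have hfin := hasDerivAt_re (htr.const_mul ((2:ℂ)⁻¹))
  have deriv_val : deriv (fun s => hNormSq (c₀ s) (v s - v₀ s)) t
      = ((2:ℂ)⁻¹ * trace
        (((((2:ℂ)⁻¹ • ((deriv c t * (c t)⁻¹) * v t - v t * (deriv c t * (c t)⁻¹))
        - (2:ℂ)⁻¹ • ((deriv c₀ t * (c₀ t)⁻¹) * v₀ t - v₀ t * (deriv c₀ t * (c₀ t)⁻¹))) * c₀ t
        + (v t - v₀ t) * deriv c₀ t) * (v t - v₀ t)ᴴ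
       + ((v t - v₀ t) * c₀ t) *
         ((2:ℂ)⁻¹ • ((v t)ᴴ * ((c t)⁻¹ᴴ * (deriv c t)ᴴ) - ((c t)⁻¹ᴴ * (deriv c t)ᴴ) * (v t)ᴴ)
          - (2:ℂ)⁻¹ • ((v₀ t)ᴴ * ((c₀ t)⁻¹ * deriv c₀ t) - ((c₀ t)⁻¹ * deriv c₀ t) * (v₀ t)ᴴ)))
        * adjugate (c₀ t)
       + ((v t - v₀ t) * c₀ t * (v t - v₀ t)ᴴ) * (-((c₀ t)⁻¹*(deriv c₀ t*(c₀ t)⁻¹))))).re := by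
    rw [funeq]
    exact hfin.deriv
  -- identify the trace with the clean commutator form
  have trval : trace
        (((((2:ℂ)⁻¹ • ((deriv c t * (c t)⁻¹) * v t - v t * (deriv c t * (c t)⁻¹))
        - (2:ℂ)⁻¹ • ((deriv c₀ t * (c₀ t)⁻¹) * v₀ t - v₀ t * (deriv c₀ t * (c₀ t)⁻¹))) * c₀ t
        + (v t - v₀ t) * deriv c₀ t) * (v t - v₀ t)ᴴ
       + ((v t - v₀ t) * c₀ t) *
         ((2:ℂ)⁻¹ • ((v t)ᴴ * ((c t)⁻¹ᴴ * (deriv c t)ᴴ) - ((c t)⁻¹ᴴ * (deriv c t)ᴴ) * (v t)ᴴ)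
          - (2:ℂ)⁻¹ • ((v₀ t)ᴴ * ((c₀ t)⁻¹ * deriv c₀ t) - ((c₀ t)⁻¹ * deriv c₀ t) * (v₀ t)ᴴ)))
        * adjugate (c₀ t)
       + ((v t - v₀ t) * c₀ t * (v t - v₀ t)ᴴ) * (-((c₀ t)⁻¹*(deriv c₀ t*(c₀ t)⁻¹))))
      = (2:ℂ)⁻¹ * trace (((deriv c t * (c t)⁻¹ - deriv c₀ t * (c₀ t)⁻¹) * v t
            - v t * (deriv c t * (c t)⁻¹ - deriv c₀ t * (c₀ t)⁻¹)) * c₀ t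
            * ((v t)ᴴ - (v₀ t)ᴴ) * (c₀ t)⁻¹)
      + (2:ℂ)⁻¹ * trace ((v t - v₀ t) * c₀ t
            * ((v t)ᴴ * ((c t)⁻¹ᴴ * (deriv c t)ᴴ - (c₀ t)⁻¹ * deriv c₀ t)
              - ((c t)⁻¹ᴴ * (deriv c t)ᴴ - (c₀ t)⁻¹ * deriv c₀ t) * (v t)ᴴ) * (c₀ t)⁻¹) := by
    rw [← hinv_eq t]
    have hsplit : ((((2:ℂ)⁻¹ • ((deriv c t * (c t)⁻¹) * v t - v t * (deriv c t * (c t)⁻¹))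
        - (2:ℂ)⁻¹ • ((deriv c₀ t * (c₀ t)⁻¹) * v₀ t - v₀ t * (deriv c₀ t * (c₀ t)⁻¹))) * c₀ t
        + (v t - v₀ t) * deriv c₀ t) * (v t - v₀ t)ᴴ
       + ((v t - v₀ t) * c₀ t) *
         ((2:ℂ)⁻¹ • ((v t)ᴴ * ((c t)⁻¹ᴴ * (deriv c t)ᴴ) - ((c t)⁻¹ᴴ * (deriv c t)ᴴ) * (v t)ᴴ)
          - (2:ℂ)⁻¹ • ((v₀ t)ᴴ * ((c₀ t)⁻¹ * deriv c₀ t) - ((c₀ t)⁻¹ * deriv c₀ t) * (v₀ t)ᴴ)))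
        * (c₀ t)⁻¹
       + ((v t - v₀ t) * c₀ t * (v t - v₀ t)ᴴ) * (-((c₀ t)⁻¹*(deriv c₀ t*(c₀ t)⁻¹)))
      = ((2:ℂ)⁻¹ • ((deriv c t * (c t)⁻¹) * v t - v t * (deriv c t * (c t)⁻¹))
          - (2:ℂ)⁻¹ • ((deriv c₀ t * (c₀ t)⁻¹) * v₀ t - v₀ t * (deriv c₀ t * (c₀ t)⁻¹)))
            * c₀ t * ((v t)ᴴ - (v₀ t)ᴴ) * (c₀ t)⁻¹
        + (v t - v₀ t) * deriv c₀ t * ((v t)ᴴ - (v₀ t)ᴴ) * (c₀ t)⁻¹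
        + (v t - v₀ t) * c₀ t *
           ((2:ℂ)⁻¹ • ((v t)ᴴ * ((c t)⁻¹ᴴ * (deriv c t)ᴴ) - ((c t)⁻¹ᴴ * (deriv c t)ᴴ) * (v t)ᴴ)
            - (2:ℂ)⁻¹ • ((v₀ t)ᴴ * ((c₀ t)⁻¹ * deriv c₀ t) - ((c₀ t)⁻¹ * deriv c₀ t) * (v₀ t)ᴴ))
           * (c₀ t)⁻¹
        + (v t - v₀ t) * c₀ t * ((v t)ᴴ - (v₀ t)ᴴ)
            * (-((c₀ t)⁻¹*(deriv c₀ t*(c₀ t)⁻¹))) := by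
      rw [Matrix.conjTranspose_sub]
      noncomm_ring
    rw [hsplit, trace_add, trace_add, trace_add]
    exact cancel (c₀ t) ((c₀ t)⁻¹) (deriv c₀ t) (v t) (v₀ t) ((v t)ᴴ) ((v₀ t)ᴴ)
      (deriv c t * (c t)⁻¹) ((c t)⁻¹ᴴ * (deriv c t)ᴴ) h1 h2
  -- real parts
  have hWcH : (((deriv c t * (c t)⁻¹ - deriv c₀ t * (c₀ t)⁻¹) * v t
        - v t * (deriv c t * (c t)⁻¹ - deriv c₀ t * (c₀ t)⁻¹)))ᴴ
      = ((v t)ᴴ * ((c t)⁻¹ᴴ * (deriv c t)ᴴ - (c₀ t)⁻¹ * deriv c₀ t)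
          - ((c t)⁻¹ᴴ * (deriv c t)ᴴ - (c₀ t)⁻¹ * deriv c₀ t) * (v t)ᴴ) := by
    simp only [Matrix.conjTranspose_sub, Matrix.conjTranspose_mul, hKH, hHdH]
  have hz2 : (trace ((v t - v₀ t) * c₀ t
        * ((v t)ᴴ * ((c t)⁻¹ᴴ * (deriv c t)ᴴ - (c₀ t)⁻¹ * deriv c₀ t)
          - ((c t)⁻¹ᴴ * (deriv c t)ᴴ - (c₀ t)⁻¹ * deriv c₀ t) * (v t)ᴴ) * (c₀ t)⁻¹)).re
      = (trace (((deriv c t * (c t)⁻¹ - deriv c₀ t * (c₀ t)⁻¹) * v t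
            - v t * (deriv c t * (c t)⁻¹ - deriv c₀ t * (c₀ t)⁻¹)) * c₀ t
            * ((v t)ᴴ - (v₀ t)ᴴ) * (c₀ t)⁻¹)).re := by
    rw [← hWcH, re_tr_symm (c₀ t) ((c₀ t)⁻¹) (v t - v₀ t)
      ((deriv c t * (c t)⁻¹ - deriv c₀ t * (c₀ t)⁻¹) * v t
        - v t * (deriv c t * (c t)⁻¹ - deriv c₀ t * (c₀ t)⁻¹)) hHH hKH,
      Matrix.conjTranspose_sub]
  have hconj : trace (((deriv c t * (c t)⁻¹ - deriv c₀ t * (c₀ t)⁻¹) * v t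
        - v t * (deriv c t * (c t)⁻¹ - deriv c₀ t * (c₀ t)⁻¹)) * c₀ t
        * (v t - v₀ t)ᴴ * (c₀ t)⁻¹)
      = trace ((g⁻¹*((deriv c t * (c t)⁻¹ - deriv c₀ t * (c₀ t)⁻¹) * v t
            - v t * (deriv c t * (c t)⁻¹ - deriv c₀ t * (c₀ t)⁻¹))*g)
          * (g⁻¹*(v t - v₀ t)*g)ᴴ) :=
    conj_trace (c₀ t) g _ _ ggH hgg
  have hz1 : (trace (((deriv c t * (c t)⁻¹ - deriv c₀ t * (c₀ t)⁻¹) * v t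
            - v t * (deriv c t * (c t)⁻¹ - deriv c₀ t * (c₀ t)⁻¹)) * c₀ t
            * ((v t)ᴴ - (v₀ t)ᴴ) * (c₀ t)⁻¹)).re
      = ipF (g⁻¹*((deriv c t * (c t)⁻¹ - deriv c₀ t * (c₀ t)⁻¹) * v t
            - v t * (deriv c t * (c t)⁻¹ - deriv c₀ t * (c₀ t)⁻¹))*g)
          (g⁻¹*(v t - v₀ t)*g) := by
    rw [← Matrix.conjTranspose_sub, hconj]
    rfl
  -- conjugated commutator decomposition
  have conj_mul : ∀ X Y : M2', (g⁻¹*X*g)*(g⁻¹*Y*g) = g⁻¹*(X*Y)*g := by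
    intro X Y
    calc (g⁻¹*X*g)*(g⁻¹*Y*g) = g⁻¹*(X*((g*g⁻¹)*(Y*g))) := by simp only [mul_assoc]
      _ = g⁻¹*(X*(Y*g)) := by rw [hg1, one_mul]
      _ = g⁻¹*(X*Y)*g := by simp only [mul_assoc]
  have hW1 : g⁻¹*((deriv c t * (c t)⁻¹ - deriv c₀ t * (c₀ t)⁻¹) * v t
            - v t * (deriv c t * (c t)⁻¹ - deriv c₀ t * (c₀ t)⁻¹))*g
      = ((g⁻¹*(deriv c t * (c t)⁻¹ - deriv c₀ t * (c₀ t)⁻¹)*g) * (g⁻¹*(v t - v₀ t)*g)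
          - (g⁻¹*(v t - v₀ t)*g) * (g⁻¹*(deriv c t * (c t)⁻¹ - deriv c₀ t * (c₀ t)⁻¹)*g))
        + ((g⁻¹*(deriv c t * (c t)⁻¹ - deriv c₀ t * (c₀ t)⁻¹)*g) * (g⁻¹*(v₀ t)*g)
          - (g⁻¹*(v₀ t)*g) * (g⁻¹*(deriv c t * (c t)⁻¹ - deriv c₀ t * (c₀ t)⁻¹)*g)) := by
    have e1 := conj_mul (deriv c t * (c t)⁻¹ - deriv c₀ t * (c₀ t)⁻¹) (v t)
    have e2 := conj_mul (v t) (deriv c t * (c t)⁻¹ - deriv c₀ t * (c₀ t)⁻¹)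
    calc g⁻¹*((deriv c t * (c t)⁻¹ - deriv c₀ t * (c₀ t)⁻¹) * v t
            - v t * (deriv c t * (c t)⁻¹ - deriv c₀ t * (c₀ t)⁻¹))*g
        = g⁻¹*((deriv c t * (c t)⁻¹ - deriv c₀ t * (c₀ t)⁻¹) * v t)*g
          - g⁻¹*(v t * (deriv c t * (c t)⁻¹ - deriv c₀ t * (c₀ t)⁻¹))*g := by noncomm_ring
      _ = (g⁻¹*(deriv c t * (c t)⁻¹ - deriv c₀ t * (c₀ t)⁻¹)*g)*(g⁻¹*(v t)*g)
          - (g⁻¹*(v t)*g)*(g⁻¹*(deriv c t * (c t)⁻¹ - deriv c₀ t * (c₀ t)⁻¹)*g) := by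
            rw [← e1, ← e2]
      _ = _ := by noncomm_ring
  -- abbreviations (as plain terms)
  have main_eq : deriv (fun s => hNormSq (c₀ s) (v s - v₀ s)) t
      = 2⁻¹ * (ipF ((g⁻¹*(deriv c t * (c t)⁻¹ - deriv c₀ t * (c₀ t)⁻¹)*g) * (g⁻¹*(v t - v₀ t)*g)
          - (g⁻¹*(v t - v₀ t)*g) * (g⁻¹*(deriv c t * (c t)⁻¹ - deriv c₀ t * (c₀ t)⁻¹)*g))
          (g⁻¹*(v t - v₀ t)*g)
        + ipF ((g⁻¹*(deriv c t * (c t)⁻¹ - deriv c₀ t * (c₀ t)⁻¹)*g) * (g⁻¹*(v₀ t)*g)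
          - (g⁻¹*(v₀ t)*g) * (g⁻¹*(deriv c t * (c t)⁻¹ - deriv c₀ t * (c₀ t)⁻¹)*g))
          (g⁻¹*(v t - v₀ t)*g)) := by
    rw [deriv_val, trval, re_half_mul, Complex.add_re, re_half_mul, re_half_mul, hz2, hz1,
      hW1, ipF_add_left]
    ring
  rw [main_eq]
  -- rewrite the right-hand side
  have target_eq : 2 * ε * (hNormSq (c₀ t) (v t - v₀ t) + hNorm (c₀ t) (v t - v₀ t))
      = 2 * ε * (2⁻¹ * Efro (g⁻¹*(v t - v₀ t)*g)
        + Real.sqrt (2⁻¹ * Efro (g⁻¹*(v t - v₀ t)*g))) := by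
    unfold hNorm
    rw [normsq_eq]
  rw [target_eq]
  -- numerical estimates
  have hu0 : 0 ≤ Efro (g⁻¹*(v t - v₀ t)*g) := Efro_nonneg _
  have hx : Efro (g⁻¹*(deriv c t * (c t)⁻¹ - deriv c₀ t * (c₀ t)⁻¹)*g) < 2*ε^2 := by
    have h1' := hr t
    unfold hNorm at h1'
    rw [normsq_eq] at h1'
    have := (Real.sqrt_lt' hε).mp h1'
    linarith
  have hy : Efro (g⁻¹*(v₀ t)*g) = 2 := by
    have h1' := hunit₀ t
    unfold hNorm at h1'
    rw [normsq_eq] at h1'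
    have := Real.sqrt_eq_one.mp h1'
    linarith
  have hEC1 := bw (g⁻¹*(deriv c t * (c t)⁻¹ - deriv c₀ t * (c₀ t)⁻¹)*g) (g⁻¹*(v t - v₀ t)*g)
  have hEC2 := bw (g⁻¹*(deriv c t * (c t)⁻¹ - deriv c₀ t * (c₀ t)⁻¹)*g) (g⁻¹*(v₀ t)*g)
  have hxnn := Efro_nonneg (g⁻¹*(deriv c t * (c t)⁻¹ - deriv c₀ t * (c₀ t)⁻¹)*g)
  have hC1le : Real.sqrt (Efro ((g⁻¹*(deriv c t * (c t)⁻¹ - deriv c₀ t * (c₀ t)⁻¹)*g)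
        * (g⁻¹*(v t - v₀ t)*g)
        - (g⁻¹*(v t - v₀ t)*g) * (g⁻¹*(deriv c t * (c t)⁻¹ - deriv c₀ t * (c₀ t)⁻¹)*g)))
      ≤ 2*ε*Real.sqrt (Efro (g⁻¹*(v t - v₀ t)*g)) := by
    have h4 : Efro ((g⁻¹*(deriv c t * (c t)⁻¹ - deriv c₀ t * (c₀ t)⁻¹)*g)
        * (g⁻¹*(v t - v₀ t)*g)
        - (g⁻¹*(v t - v₀ t)*g) * (g⁻¹*(deriv c t * (c t)⁻¹ - deriv c₀ t * (c₀ t)⁻¹)*g))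
        ≤ (2*ε)^2 * Efro (g⁻¹*(v t - v₀ t)*g) := by
      nlinarith [mul_nonneg (sub_nonneg.mpr hx.le) hu0]
    calc _ ≤ Real.sqrt ((2*ε)^2 * Efro (g⁻¹*(v t - v₀ t)*g)) := Real.sqrt_le_sqrt h4
      _ = 2*ε*Real.sqrt (Efro (g⁻¹*(v t - v₀ t)*g)) := by
          rw [Real.sqrt_mul (sq_nonneg _), Real.sqrt_sq (by linarith : (0:ℝ) ≤ 2*ε)]
  have hs2 : Real.sqrt 2 * Real.sqrt 2 = 2 := Real.mul_self_sqrt (by norm_num)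
  have hs2pos : (0:ℝ) < Real.sqrt 2 := by positivity
  have hC2le : Real.sqrt (Efro ((g⁻¹*(deriv c t * (c t)⁻¹ - deriv c₀ t * (c₀ t)⁻¹)*g)
        * (g⁻¹*(v₀ t)*g)
        - (g⁻¹*(v₀ t)*g) * (g⁻¹*(deriv c t * (c t)⁻¹ - deriv c₀ t * (c₀ t)⁻¹)*g)))
      ≤ 2*Real.sqrt 2*ε := by
    have h4 : Efro ((g⁻¹*(deriv c t * (c t)⁻¹ - deriv c₀ t * (c₀ t)⁻¹)*g)
        * (g⁻¹*(v₀ t)*g)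
        - (g⁻¹*(v₀ t)*g) * (g⁻¹*(deriv c t * (c t)⁻¹ - deriv c₀ t * (c₀ t)⁻¹)*g))
        ≤ (2*Real.sqrt 2*ε)^2 := by nlinarith [hEC2, hy, hx, hxnn]
    calc _ ≤ Real.sqrt ((2*Real.sqrt 2*ε)^2) := Real.sqrt_le_sqrt h4
      _ = 2*Real.sqrt 2*ε := Real.sqrt_sq (by positivity)
  have hi1 : ipF ((g⁻¹*(deriv c t * (c t)⁻¹ - deriv c₀ t * (c₀ t)⁻¹)*g) * (g⁻¹*(v t - v₀ t)*g)
          - (g⁻¹*(v t - v₀ t)*g) * (g⁻¹*(deriv c t * (c t)⁻¹ - deriv c₀ t * (c₀ t)⁻¹)*g))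
          (g⁻¹*(v t - v₀ t)*g)
      ≤ 2*ε*Efro (g⁻¹*(v t - v₀ t)*g) := by
    have h5 := ipF_le ((g⁻¹*(deriv c t * (c t)⁻¹ - deriv c₀ t * (c₀ t)⁻¹)*g)
        * (g⁻¹*(v t - v₀ t)*g)
        - (g⁻¹*(v t - v₀ t)*g) * (g⁻¹*(deriv c t * (c t)⁻¹ - deriv c₀ t * (c₀ t)⁻¹)*g))
      (g⁻¹*(v t - v₀ t)*g)
    have h6 := mul_le_mul_of_nonneg_right hC1le
      (Real.sqrt_nonneg (Efro (g⁻¹*(v t - v₀ t)*g)))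
    have h7 : Real.sqrt (Efro (g⁻¹*(v t - v₀ t)*g)) * Real.sqrt (Efro (g⁻¹*(v t - v₀ t)*g))
        = Efro (g⁻¹*(v t - v₀ t)*g) := Real.mul_self_sqrt hu0
    nlinarith [h5, h6, h7]
  have hi2 : ipF ((g⁻¹*(deriv c t * (c t)⁻¹ - deriv c₀ t * (c₀ t)⁻¹)*g) * (g⁻¹*(v₀ t)*g)
          - (g⁻¹*(v₀ t)*g) * (g⁻¹*(deriv c t * (c t)⁻¹ - deriv c₀ t * (c₀ t)⁻¹)*g))
          (g⁻¹*(v t - v₀ t)*g)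
      ≤ 2*Real.sqrt 2*ε*Real.sqrt (Efro (g⁻¹*(v t - v₀ t)*g)) := by
    have h5 := ipF_le ((g⁻¹*(deriv c t * (c t)⁻¹ - deriv c₀ t * (c₀ t)⁻¹)*g) * (g⁻¹*(v₀ t)*g)
        - (g⁻¹*(v₀ t)*g) * (g⁻¹*(deriv c t * (c t)⁻¹ - deriv c₀ t * (c₀ t)⁻¹)*g))
      (g⁻¹*(v t - v₀ t)*g)
    have h6 := mul_le_mul_of_nonneg_right hC2le
      (Real.sqrt_nonneg (Efro (g⁻¹*(v t - v₀ t)*g)))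
    linarith
  -- final numeric computation
  have hsqrt_half : Real.sqrt (2⁻¹ * Efro (g⁻¹*(v t - v₀ t)*g))
      = (Real.sqrt 2)⁻¹ * Real.sqrt (Efro (g⁻¹*(v t - v₀ t)*g)) := by
    rw [Real.sqrt_mul (by norm_num : (0:ℝ) ≤ 2⁻¹), Real.sqrt_inv]
  rw [hsqrt_half]
  have hinv2 : (Real.sqrt 2)⁻¹ = Real.sqrt 2 / 2 := by
    rw [eq_div_iff (by norm_num : (2:ℝ) ≠ 0), inv_mul_eq_div, div_eq_iff hs2pos.ne']
    linarith [hs2]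
  rw [hinv2]
  have hsu := Real.sqrt_nonneg (Efro (g⁻¹*(v t - v₀ t)*g))
  nlinarith [hi1, hi2]
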